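/- (Bound on the number of validators) Suppose θ·Δ_j > Σ_{i=1}^{n} α(v_i, s_j) for every SSP s_j, and suppose strong shared security holds in the form (1/n)·( Σ_{j=1}^{k} Σ_{i=1}^{n} α(v_i, s_j) + r·Δ ) > π with π > 0. Then the number of validators satisfies n < (θ + r)·Δ / π. -/

import Mathlib

open Finset

/-- **Bound on the number of validators.** If attack stake stays strictly below the capture
threshold in every SSP and strong shared security holds
(`(1/n)·(Σ_j Σ_i α + r·Δ) > π` with `π > 0`), then `n < (θ + r)·Δ / π`. -/
theorem validator_count_bound
    {V S : Type*} [Fintype V] [Fintype S] [Nonempty V] [Nonempty S]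
    (ω α : V → S → ℝ) (θ r π : ℝ)
    (hωnonneg : ∀ v s, 0 ≤ ω v s)
    (hαnonneg : ∀ v s, 0 ≤ α v s)
    (hαle : ∀ v s, α v s ≤ ω v s)
    (hθ0 : 0 < θ) (hθ1 : θ < 1) (hr : 0 < r) (hπ : 0 < π)
    (hbelow : ∀ s, (∑ v, α v s) < θ * ∑ v, ω v s)
    (hstrong : π < (1 / (Fintype.card V : ℝ)) *
        ((∑ s, ∑ v, α v s) + r * (∑ s, ∑ v, ω v s))) :
    (Fintype.card V : ℝ) < (θ + r) * (∑ s, ∑ v, ω v s) / π := by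
  have hn : 0 < (Fintype.card V : ℝ) := by
    exact_mod_cast Fintype.card_pos
  have hα : (∑ s, ∑ v, α v s) < θ * (∑ s, ∑ v, ω v s) := by
    rw [mul_sum]
    exact Finset.sum_lt_sum_of_nonempty univ_nonempty (fun s _ => hbelow s)
  have h1 : (Fintype.card V : ℝ) * π <
      (∑ s, ∑ v, α v s) + r * (∑ s, ∑ v, ω v s) := by
    have := (mul_lt_mul_iff_right₀ hn).2 hstrong
    rwa [← mul_assoc, mul_one_div, div_self hn.ne', one_mul] at this
  have h2 : (Fintype.card V : ℝ) * π < (θ + r) * (∑ s, ∑ v, ω v s) := by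
    calc (Fintype.card V : ℝ) * π < _ := h1
      _ < (θ + r) * (∑ s, ∑ v, ω v s) := by
        rw [add_mul]; exact add_lt_add_left hα _
  rw [lt_div_iff₀ hπ]
  exact h2
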